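/- Let W be a finite-dimensional vector space of dimension n ≥ 1, V a vector space, and ρ : W → V a nonzero linear map with dual ρ* : V* → W*. Suppose π ∈ V ⊗ Λ^n W satisfies ι_{ρ*ξ}(ι_η π) = −ι_{ρ*η}(ι_ξ π) for all ξ, η ∈ V*, where ι_η contracts the V-factor and ι_{ρ*ξ} contracts the Λ^n W-factor. Then π = 0. -/

import Mathlib

open ExteriorAlgebra

/-- The subspace `(Λ^p V) ⊗ (Λ^q W) ⊆ Λ^{p+q}(V ⊕ W)`. -/
noncomputable def mixedPiece (V W : Type*) [AddCommGroup V] [Module ℝ V]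
    [AddCommGroup W] [Module ℝ W] (p q : ℕ) :
    Submodule ℝ (ExteriorAlgebra ℝ (V × W)) :=
  Submodule.span ℝ { z | ∃ (X : Fin p → V) (u : Fin q → W),
    z = (List.ofFn fun i => ExteriorAlgebra.ι ℝ ((X i, (0 : W)) : V × W)).prod *
        (List.ofFn fun j => ExteriorAlgebra.ι ℝ (((0 : V), u j) : V × W)).prod }

/-- Any alternating map in top degree is determined by its value on a basis. -/
theorem alt_eq_det_smul {W N : Type*} [AddCommGroup W] [Module ℝ W]
    [AddCommGroup N] [Module ℝ N] {n : ℕ} (e : Module.Basis (Fin n) ℝ W)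
    (g : W [⋀^Fin n]→ₗ[ℝ] N) (u : Fin n → W) :
    g u = e.det u • g e := by
  have h : g = ((LinearMap.id (R := ℝ) (M := ℝ)).smulRight (g e)).compAlternatingMap e.det := by
    refine Module.Basis.ext_alternating e fun v hv => ?_
    let σ : Equiv.Perm (Fin n) := Equiv.ofBijective v (Finite.injective_iff_bijective.1 hv)
    have h1 : (fun i => e (v i)) = (e : Fin n → W) ∘ σ := rfl
    rw [h1, AlternatingMap.map_perm, LinearMap.compAlternatingMap_apply,
      AlternatingMap.map_perm, Module.Basis.det_self]
    simp
  conv_lhs => rw [h]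
  simp


/-- Every element of `mixedPiece V W 1 (m+1)` is of the form `ι (x,0) * Ω` for the
top wedge `Ω` of any basis of `W`. -/
theorem mixed_rep {V W : Type*} [AddCommGroup V] [Module ℝ V]
    [AddCommGroup W] [Module ℝ W] {m : ℕ} (e : Module.Basis (Fin (m + 1)) ℝ W)
    (π : ExteriorAlgebra ℝ (V × W)) (hπ : π ∈ mixedPiece V W 1 (m + 1)) :
    ∃ x : V, π = ExteriorAlgebra.ι ℝ ((x, (0 : W)) : V × W) *
      (List.ofFn fun j : Fin (m + 1) => ExteriorAlgebra.ι ℝ (((0 : V), e j) : V × W)).prod := by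
  classical
  set Ω : ExteriorAlgebra ℝ (V × W) :=
    (List.ofFn fun j : Fin (m + 1) => ExteriorAlgebra.ι ℝ (((0 : V), e j) : V × W)).prod
    with hΩdef
  have hπ' : π ∈ Submodule.span ℝ { z : ExteriorAlgebra ℝ (V × W) |
      ∃ (X : Fin 1 → V) (u : Fin (m + 1) → W),
      z = (List.ofFn fun i => ExteriorAlgebra.ι ℝ ((X i, (0 : W)) : V × W)).prod *
          (List.ofFn fun j => ExteriorAlgebra.ι ℝ (((0 : V), u j) : V × W)).prod } := hπ
  refine Submodule.span_induction
    (p := fun z _ => ∃ x : V, z = ExteriorAlgebra.ι ℝ ((x, (0 : W)) : V × W) * Ω)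
    ?_ ?_ ?_ ?_ hπ'
  · rintro z ⟨X, u, rfl⟩
    refine ⟨e.det u • X 0, ?_⟩
    have h2 : (List.ofFn fun j : Fin (m + 1) =>
        ExteriorAlgebra.ι ℝ (((0 : V), u j) : V × W)).prod = e.det u • Ω := by
      have hg := alt_eq_det_smul e
        ((ExteriorAlgebra.ιMulti ℝ (m + 1)).compLinearMap (LinearMap.inr ℝ V W)) u
      simpa [AlternatingMap.compLinearMap_apply, ExteriorAlgebra.ιMulti_apply,
        LinearMap.inr_apply, hΩdef, Matrix.vecTail] using hg
    have h1 : (List.ofFn fun i : Fin 1 =>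
        ExteriorAlgebra.ι ℝ ((X i, (0 : W)) : V × W)).prod =
        ExteriorAlgebra.ι ℝ ((X 0, (0 : W)) : V × W) := by
      simp [List.ofFn_succ]
    rw [h1, h2, mul_smul_comm]
    have h3 : ((e.det u • X 0, (0 : W)) : V × W) = e.det u • ((X 0, (0 : W)) : V × W) := by
      simp [Prod.smul_mk]
    rw [h3, map_smul, smul_mul_assoc]
  · exact ⟨0, by simp [Prod.mk_zero_zero]⟩
  · rintro z₁ z₂ - - ⟨x₁, rfl⟩ ⟨x₂, rfl⟩
    refine ⟨x₁ + x₂, ?_⟩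
    have h3 : ((x₁ + x₂, (0 : W)) : V × W) = (x₁, (0 : W)) + (x₂, (0 : W)) := by
      simp [Prod.mk_add_mk]
    rw [h3, map_add, add_mul]
  · rintro r z - ⟨x, rfl⟩
    refine ⟨r • x, ?_⟩
    have h3 : ((r • x, (0 : W)) : V × W) = r • ((x, (0 : W)) : V × W) := by
      simp [Prod.smul_mk]
    rw [h3, map_smul, smul_mul_assoc]

set_option maxHeartbeats 1600000 in
/-- if `dim W = n ≥ 1`, `ρ : W → V` is a nonzero linear map, and
`π ∈ V ⊗ Λ^n W` satisfies the ρ-compatibility condition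
`ι_{ρ*ξ} ι_η π = − ι_{ρ*η} ι_ξ π` for all `ξ, η ∈ V*`, then `π = 0`. -/
theorem compatible_top_tensor_vanishes (V W : Type*) [AddCommGroup V] [Module ℝ V]
    [AddCommGroup W] [Module ℝ W] [FiniteDimensional ℝ W]
    (n : ℕ) (hn : Module.finrank ℝ W = n) (hn1 : 1 ≤ n)
    (ρ : W →ₗ[ℝ] V) (hρ : ρ ≠ 0)
    (c : ((V × W) →ₗ[ℝ] ℝ) → Module.End ℝ (ExteriorAlgebra ℝ (V × W)))
    (hcone : ∀ θ, c θ 1 = 0)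
    (hcmul : ∀ θ (m : V × W) (x : ExteriorAlgebra ℝ (V × W)),
      c θ (ExteriorAlgebra.ι ℝ m * x) = θ m • x - ExteriorAlgebra.ι ℝ m * c θ x)
    (π : ExteriorAlgebra ℝ (V × W)) (hπ : π ∈ mixedPiece V W 1 n)
    (hcompat : ∀ ξ η : V →ₗ[ℝ] ℝ,
      c (ξ ∘ₗ ρ ∘ₗ LinearMap.snd ℝ V W) (c (η ∘ₗ LinearMap.fst ℝ V W) π)
        = - c (η ∘ₗ ρ ∘ₗ LinearMap.snd ℝ V W) (c (ξ ∘ₗ LinearMap.fst ℝ V W) π)) :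
    π = 0 := by
  classical
  obtain ⟨m, rfl⟩ : ∃ m, n = m + 1 := ⟨n - 1, by omega⟩
  -- a key computational lemma about contractions of products
  have L1 : ∀ (θ : (V × W) →ₗ[ℝ] ℝ) (l : List (V × W)), (∀ z ∈ l, θ z = 0) →
      c θ (l.map (ExteriorAlgebra.ι ℝ)).prod = 0 := by
    intro θ l
    induction l with
    | nil => intro _; simpa using hcone θ
    | cons z l ih =>
      intro h
      simp only [List.map_cons, List.prod_cons]
      rw [hcmul, ih (fun w hw => h w (List.mem_cons_of_mem _ hw)),
        h z (List.mem_cons_self)]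
      simp
  -- choose `w0` with `ρ w0 ≠ 0` and a dual vector `ξ0` with `ξ0 (ρ w0) = 1`
  obtain ⟨w0, hw0⟩ : ∃ w, ρ w ≠ 0 := by
    by_contra h
    push_neg at h
    exact hρ (LinearMap.ext fun w => by simp [h w])
  obtain ⟨ξ1, hξ1⟩ : ∃ ξ : V →ₗ[ℝ] ℝ, ξ (ρ w0) ≠ 0 := by
    by_contra h
    push_neg at h
    exact hw0 ((Module.forall_dual_apply_eq_zero_iff ℝ (ρ w0)).1 fun φ => h φ)
  obtain ⟨ξ0, hξ0⟩ : ∃ ξ0 : V →ₗ[ℝ] ℝ, ξ0 (ρ w0) = 1 := by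
    refine ⟨(ξ1 (ρ w0))⁻¹ • ξ1, ?_⟩
    simp only [LinearMap.smul_apply, smul_eq_mul]
    exact inv_mul_cancel₀ hξ1
  -- build a basis of `W` adapted to `φ := ξ0 ∘ ρ`
  obtain ⟨e, he0, hesucc⟩ : ∃ e : Module.Basis (Fin (m + 1)) ℝ W,
      e 0 = w0 ∧ ∀ j : Fin m, ξ0 (ρ (e j.succ)) = 0 := by
    set φ : W →ₗ[ℝ] ℝ := ξ0 ∘ₗ ρ with hφdef
    have hφw0 : φ w0 = 1 := hξ0
    have hker : Module.finrank ℝ (LinearMap.ker φ) = m := by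
      have h1 := LinearMap.finrank_range_add_finrank_ker φ
      have hr : LinearMap.range φ = ⊤ := by
        rw [LinearMap.range_eq_top]
        intro r
        exact ⟨r • w0, by simp [hφw0]⟩
      rw [hr, finrank_top, Module.finrank_self] at h1
      omega
    obtain ⟨b⟩ : Nonempty (Module.Basis (Fin m) ℝ (LinearMap.ker φ)) :=
      ⟨Module.finBasisOfFinrankEq ℝ _ hker⟩
    have hli : ∀ (r : ℝ), ∀ x ∈ LinearMap.ker φ, r • w0 + x = 0 → r = 0 := by
      intro r x hx h
      have h2 := congrArg φ h
      rw [map_add, map_smul, hφw0, LinearMap.mem_ker.1 hx] at h2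
      simpa using h2
    have hsp : ∀ z : W, ∃ r : ℝ, z + r • w0 ∈ LinearMap.ker φ := by
      intro z
      exact ⟨-φ z, by simp [LinearMap.mem_ker, hφw0]⟩
    refine ⟨Module.Basis.mkFinCons w0 b hli hsp, ?_, ?_⟩
    · have h3 := congrFun (Module.Basis.coe_mkFinCons w0 b hli hsp) 0
      rw [h3, Fin.cons_zero]
    · intro j
      have h3 := congrFun (Module.Basis.coe_mkFinCons w0 b hli hsp) j.succ
      rw [h3, Fin.cons_succ]
      exact LinearMap.mem_ker.1 (b j).2
  -- the top forms
  set Ω' : ExteriorAlgebra ℝ (V × W) :=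
    (List.ofFn fun j : Fin m => ExteriorAlgebra.ι ℝ (((0 : V), e j.succ) : V × W)).prod
    with hΩ'def
  set Ω : ExteriorAlgebra ℝ (V × W) :=
    (List.ofFn fun j : Fin (m + 1) => ExteriorAlgebra.ι ℝ (((0 : V), e j) : V × W)).prod
    with hΩdef
  have hΩsplit : Ω = ExteriorAlgebra.ι ℝ (((0 : V), e 0) : V × W) * Ω' := by
    rw [hΩdef, List.ofFn_succ, List.prod_cons]
  -- representation of π
  obtain ⟨x, hx⟩ : ∃ x : V, π = ExteriorAlgebra.ι ℝ ((x, (0 : W)) : V × W) * Ω :=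
    mixed_rep e π hπ
  -- contraction computations
  have hmapΩ : (List.ofFn fun j : Fin (m + 1) =>
      ExteriorAlgebra.ι ℝ (((0 : V), e j) : V × W)) =
      List.map (ExteriorAlgebra.ι ℝ) (List.ofFn fun j : Fin (m + 1) => (((0 : V), e j) : V × W)) :=
    (List.map_ofFn).symm
  have hmapΩ' : (List.ofFn fun j : Fin m =>
      ExteriorAlgebra.ι ℝ (((0 : V), e j.succ) : V × W)) =
      List.map (ExteriorAlgebra.ι ℝ) (List.ofFn fun j : Fin m => (((0 : V), e j.succ) : V × W)) :=
    (List.map_ofFn).symm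
  have hfstΩ : ∀ η : V →ₗ[ℝ] ℝ, c (η ∘ₗ LinearMap.fst ℝ V W) Ω = 0 := by
    intro η
    rw [hΩdef, hmapΩ]
    refine L1 _ _ ?_
    intro z hz
    rw [List.mem_ofFn] at hz
    obtain ⟨j, rfl⟩ := hz
    simp only [LinearMap.comp_apply, LinearMap.fst_apply, map_zero]
  have hfstπ : ∀ η : V →ₗ[ℝ] ℝ, c (η ∘ₗ LinearMap.fst ℝ V W) π = η x • Ω := by
    intro η
    rw [hx, hcmul, hfstΩ]
    simp only [LinearMap.comp_apply, LinearMap.fst_apply, mul_zero, sub_zero]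
  have hθ0Ω' : c (ξ0 ∘ₗ ρ ∘ₗ LinearMap.snd ℝ V W) Ω' = 0 := by
    rw [hΩ'def, hmapΩ']
    refine L1 _ _ ?_
    intro z hz
    rw [List.mem_ofFn] at hz
    obtain ⟨j, rfl⟩ := hz
    simpa only [LinearMap.comp_apply, LinearMap.snd_apply] using hesucc j
  have hθ0Ω : c (ξ0 ∘ₗ ρ ∘ₗ LinearMap.snd ℝ V W) Ω = Ω' := by
    rw [hΩsplit, hcmul, hθ0Ω']
    have h4 : (ξ0 ∘ₗ ρ ∘ₗ LinearMap.snd ℝ V W) (((0 : V), e 0) : V × W) = 1 := by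
      simp only [LinearMap.comp_apply, LinearMap.snd_apply]
      rw [he0]; exact hξ0
    rw [h4, one_smul, mul_zero, sub_zero]
  -- exploiting the compatibility
  have key : ∀ η : V →ₗ[ℝ] ℝ, η x • Ω' =
      -(ξ0 x • c (η ∘ₗ ρ ∘ₗ LinearMap.snd ℝ V W) Ω) := by
    intro η
    have h := hcompat ξ0 η
    rw [hfstπ η, hfstπ ξ0, map_smul, map_smul, hθ0Ω] at h
    rw [h]
  have hdiag : ξ0 x • Ω' = 0 := by
    have h := key ξ0
    rw [hθ0Ω] at h
    have h2 : (2 : ℝ) • (ξ0 x • Ω') = 0 := by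
      rw [two_smul]
      nth_rewrite 1 [h]
      rw [neg_add_cancel]
    calc ξ0 x • Ω' = (2 : ℝ)⁻¹ • ((2 : ℝ) • (ξ0 x • Ω')) := by
          rw [smul_smul]; norm_num
      _ = 0 := by rw [h2, smul_zero]
  have hΩ'zero : Ω' = 0 → π = 0 := by
    intro h0
    rw [hx, hΩsplit, h0, mul_zero, mul_zero]
  by_cases hξ0x : ξ0 x = 0
  · -- then `η x • Ω' = 0` for every `η`
    have hall : ∀ η : V →ₗ[ℝ] ℝ, η x • Ω' = 0 := by
      intro η
      rw [key η, hξ0x, zero_smul, neg_zero]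
    by_cases hxz : x = 0
    · rw [hx, hxz, Prod.mk_zero_zero, map_zero, zero_mul]
    · obtain ⟨η, hη⟩ : ∃ η : V →ₗ[ℝ] ℝ, η x ≠ 0 := by
        by_contra h
        push_neg at h
        exact hxz ((Module.forall_dual_apply_eq_zero_iff ℝ x).1 fun ψ => h ψ)
      refine hΩ'zero ?_
      have h5 := hall η
      calc Ω' = (η x)⁻¹ • (η x • Ω') := by rw [smul_smul, inv_mul_cancel₀ hη, one_smul]
        _ = 0 := by rw [h5, smul_zero]
  · refine hΩ'zero ?_
    calc Ω' = (ξ0 x)⁻¹ • (ξ0 x • Ω') := by rw [smul_smul, inv_mul_cancel₀ hξ0x, one_smul]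
      _ = 0 := by rw [hdiag, smul_zero]
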